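/- arXiv:1508.02173 — 7 statements merged into one kernel-verified Lean document; each statement's English description precedes it below -/
import Mathlib

section
/- In the star graph S_n (Cayley graph of the symmetric group on n elements with generating set the transpositions (1,i) for 2 ≤ i ≤ n), any two distinct non-adjacent vertices have at most one common neighbor. -/
/-- The star graph `S_n`: vertices are permutations of `Fin n`, and `p ~ q` iff
`q = p * (1, i)` for some transposition `(1, i)` with `i ≠ 1` (here index `0` plays
the role of `1`). -/
def starGraph (n : ℕ) [NeZero n] : SimpleGraph (Equiv.Perm (Fin n)) where
  Adj p q := ∃ i : Fin n, i ≠ 0 ∧ q = p * Equiv.swap 0 i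
  symm := by
    constructor
    rintro p q ⟨i, hi, rfl⟩
    exact ⟨i, hi, by rw [mul_assoc, Equiv.swap_mul_self, mul_one]⟩
  loopless := by
    constructor
    rintro p ⟨i, hi, h⟩
    have hs : Equiv.swap (0 : Fin n) i = 1 := (left_eq_mul.mp h)
    exact hi (Equiv.swap_eq_one_iff.mp hs).symm

/-- In the star graph `S_n`, any two distinct non-adjacent vertices have at most one
common neighbor. -/
theorem starGraph_common_neighbors_le_one (n : ℕ) [NeZero n]
    (x y : Equiv.Perm (Fin n)) (hxy : x ≠ y) (hadj : ¬ (starGraph n).Adj x y) :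
    ((starGraph n).commonNeighbors x y).ncard ≤ 1 := by
  rw [Set.ncard_le_one_iff (Set.toFinite _)]
  rintro z w ⟨⟨i, hi, rfl⟩, j, hj, hzj⟩ ⟨⟨k, hk, rfl⟩, l, hl, hwl⟩
  -- hzj : x * swap 0 i = y * swap 0 j,  hwl : x * swap 0 k = y * swap 0 l
  have hy : y = x * Equiv.swap 0 i * Equiv.swap 0 j := by
    rw [hzj, mul_assoc, Equiv.swap_mul_self, mul_one]
  by_cases hik : i = k
  · rw [hik]
  · exfalso
    have hkey : Equiv.swap (0 : Fin n) i * Equiv.swap 0 k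
        = Equiv.swap 0 j * Equiv.swap 0 l := by
      have h1 : x * Equiv.swap 0 k = x * (Equiv.swap 0 i * Equiv.swap 0 j * Equiv.swap 0 l) := by
        rw [hwl, hy]; group
      have h2 := mul_left_cancel h1
      calc Equiv.swap (0 : Fin n) i * Equiv.swap 0 k
          = Equiv.swap 0 i * (Equiv.swap 0 i * Equiv.swap 0 j * Equiv.swap 0 l) := by rw [h2]
        _ = Equiv.swap 0 j * Equiv.swap 0 l := by
            rw [← mul_assoc, ← mul_assoc, Equiv.swap_mul_self, one_mul]
    have h0 := Equiv.congr_fun hkey 0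
    simp only [Equiv.Perm.mul_apply, Equiv.swap_apply_left] at h0
    -- h0 : swap 0 i k = swap 0 j l
    rw [Equiv.swap_apply_of_ne_of_ne hk (fun h => hik h.symm)] at h0
    by_cases hjl : j = l
    · subst hjl
      rw [Equiv.swap_apply_right] at h0
      exact hk h0
    · rw [Equiv.swap_apply_of_ne_of_ne hl (fun h => hjl h.symm)] at h0
      -- h0 : k = l
      subst h0
      have hij : Equiv.swap (0 : Fin n) i = Equiv.swap 0 j := mul_right_cancel hkey
      have : i = j := by
        have := Equiv.congr_fun hij 0
        simpa using this
      subst this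
      apply hxy
      rw [hy, mul_assoc, Equiv.swap_mul_self, mul_one]
end

section
/- In the (n,k)-arrangement graph A_{n,k} with n ≥ k + 2, any two adjacent vertices have exactly n − k − 1 common neighbors. -/
/-- The `(n,k)`-arrangement graph `A_{n,k}`: vertices are arrangements (injections)
of `k` elements from `{1, …, n}`, and two arrangements are adjacent iff they differ
in exactly one position. -/
def arrGraph (n k : ℕ) : SimpleGraph (Fin k ↪ Fin n) where
  Adj p q := ∃ i : Fin k, p i ≠ q i ∧ ∀ j : Fin k, j ≠ i → p j = q j
  symm := by
    constructor
    rintro p q ⟨i, hi, hj⟩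
    exact ⟨i, hi.symm, fun j hji => (hj j hji).symm⟩
  loopless := by
    constructor
    rintro p ⟨i, hi, -⟩
    exact hi rfl

/-- In `A_{n,k}` with `n ≥ k + 2`, any two adjacent vertices have exactly
`n - k - 1` common neighbors. -/
theorem arrGraph_common_neighbors_adj (n k : ℕ) (hn : k + 2 ≤ n)
    (p q : Fin k ↪ Fin n) (hpq : (arrGraph n k).Adj p q) :
    ((arrGraph n k).commonNeighbors p q).ncard = n - k - 1 := by
  classical
  obtain ⟨i, hi, hoff⟩ := hpq
  set S : Set (Fin n) := {x | x ∉ Set.range ⇑p ∧ x ≠ q i} with hS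
  set T : Set (Fin k ↪ Fin n) := {r | r i ∈ S ∧ ∀ j, j ≠ i → r j = p j} with hT
  have hchar : (arrGraph n k).commonNeighbors p q = T := by
    ext r
    constructor
    · rintro ⟨⟨a, ha, ha'⟩, ⟨b, hb, hb'⟩⟩
      have hab : a = b := by
        by_contra hne
        have h1 : q a = r a := hb' a hne
        have h2 : p b = r b := ha' b (fun h => hne h.symm)
        rcases eq_or_ne a i with rfl | hai
        · have hbi : b ≠ a := fun h => hne h.symm
          exact hb ((hoff b hbi).symm.trans h2)
        · exact ha ((hoff a hai).trans h1)
      have hia : i = a := by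
        by_contra hne
        have h1 : p i = r i := ha' i hne
        have h2 : q i = r i := by
          rw [← hab] at hb'
          exact hb' i hne
        exact hi (h1.trans h2.symm)
      subst hia
      subst hab
      refine ⟨⟨?_, fun h => hb h.symm⟩, fun j hj => (ha' j hj).symm⟩
      rintro ⟨j, hj⟩
      rcases eq_or_ne j i with rfl | hj'
      · exact ha hj
      · exact hj' (r.injective ((ha' j hj').symm.trans hj))
    · rintro ⟨⟨hr1, hr2⟩, hr3⟩
      have hri : p i ≠ r i := fun h => hr1 ⟨i, h⟩
      refine ⟨⟨i, hri, fun j hj => (hr3 j hj).symm⟩,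
        ⟨i, fun h => hr2 h.symm, fun j hj => ((hoff j hj).symm.trans (hr3 j hj).symm)⟩⟩
  rw [hchar]
  have himg : (fun r : Fin k ↪ Fin n => r i) '' T = S := by
    ext x
    constructor
    · rintro ⟨r, hr, rfl⟩; exact hr.1
    · rintro ⟨hx1, hx2⟩
      have hinj : Function.Injective (Function.update (⇑p) i x) := by
        intro a b hab
        by_cases ha : a = i <;> by_cases hb : b = i
        · rw [ha, hb]
        · rw [ha, Function.update_self, Function.update_of_ne hb] at hab
          exact (hx1 ⟨b, hab.symm⟩).elim
        · rw [hb, Function.update_self, Function.update_of_ne ha] at hab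
          exact (hx1 ⟨a, hab⟩).elim
        · rw [Function.update_of_ne ha, Function.update_of_ne hb] at hab
          exact p.injective hab
      refine ⟨⟨_, hinj⟩, ⟨?_, fun j hj => ?_⟩, ?_⟩
      · show Function.update (⇑p) i x i ∈ S
        rw [Function.update_self]; exact ⟨hx1, hx2⟩
      · show Function.update (⇑p) i x j = p j
        exact Function.update_of_ne hj x ⇑p
      · show Function.update (⇑p) i x i = x
        exact Function.update_self i x ⇑p
  have hinjOn : Set.InjOn (fun r : Fin k ↪ Fin n => r i) T := by
    rintro r hr s hs h
    apply DFunLike.ext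
    intro j
    rcases eq_or_ne j i with rfl | hj
    · exact h
    · exact (hr.2 j hj).trans (hs.2 j hj).symm
  have hTS : T.ncard = S.ncard := by
    rw [← himg, Set.ncard_image_of_injOn hinjOn]
  rw [hTS]
  have hScompl : S = (insert (q i) (Set.range ⇑p))ᶜ := by
    ext x; simp [hS, Set.mem_insert_iff, and_comm, not_or]
  have hqi : q i ∉ Set.range ⇑p := by
    rintro ⟨j, hj⟩
    rcases eq_or_ne j i with rfl | hj'
    · exact hi hj
    · exact hj' (q.injective ((hoff j hj').symm.trans hj))
  have hrange : (Set.range ⇑p).ncard = k := by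
    rw [← Nat.card_coe_set_eq, Nat.card_range_of_injective p.injective,
      Nat.card_eq_fintype_card, Fintype.card_fin]
  have hcard : (insert (q i) (Set.range ⇑p)).ncard = k + 1 := by
    rw [Set.ncard_insert_of_notMem hqi, hrange]
  have hsum := Set.ncard_add_ncard_compl (insert (q i) (Set.range ⇑p))
  rw [hcard, Nat.card_eq_fintype_card, Fintype.card_fin] at hsum
  rw [hScompl]
  omega
end

section
/- In the (n,k)-arrangement graph A_{n,k} with n ≥ k + 2, any two non-adjacent vertices have at most 2 common neighbors. -/
/-- Structure of a common neighbor of two distinct non-adjacent vertices. -/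
lemma arrGraph_cn_aux {n k : ℕ} {p q r : Fin k ↪ Fin n} (hne : p ≠ q)
    (hpq : ¬ (arrGraph n k).Adj p q)
    (h1 : (arrGraph n k).Adj p r) (h2 : (arrGraph n k).Adj q r) :
    ∃ i j : Fin k, i ≠ j ∧ r i = q i ∧ (∀ x, x ≠ i → r x = p x) ∧
      p i ≠ q i ∧ p j ≠ q j ∧ (∀ x, x ≠ i → x ≠ j → p x = q x) := by
  obtain ⟨i, hi, hieq⟩ := h1
  obtain ⟨j, hj, hjeq⟩ := h2
  have hij : i ≠ j := by
    rintro rfl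
    have hagree : ∀ x, x ≠ i → p x = q x :=
      fun x hx => (hieq x hx).trans (hjeq x hx).symm
    have hpi : p i ≠ q i := by
      intro h
      exact hne (DFunLike.coe_injective (funext fun x => by
        by_cases hx : x = i
        · rw [hx]; exact h
        · exact hagree x hx))
    exact hpq ⟨i, hpi, hagree⟩
  have hriq : r i = q i := (hjeq i hij).symm
  have hrjp : r j = p j := (hieq j hij.symm).symm
  refine ⟨i, j, hij, hriq, fun x hx => (hieq x hx).symm, ?_, ?_, ?_⟩
  · intro h; exact hi (h.trans hriq.symm)
  · intro h; exact hj (h ▸ hrjp.symm)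
  · intro x hxi hxj
    exact (hieq x hxi).trans (hjeq x hxj).symm

/-- In `A_{n,k}` with `n ≥ k + 2`, any two distinct non-adjacent vertices have at
most `2` common neighbors. -/
theorem arrGraph_common_neighbors_nonadj (n k : ℕ) (hn : k + 2 ≤ n)
    (p q : Fin k ↪ Fin n) (hne : p ≠ q) (hpq : ¬ (arrGraph n k).Adj p q) :
    ((arrGraph n k).commonNeighbors p q).ncard ≤ 2 := by
  classical
  by_cases hS : ((arrGraph n k).commonNeighbors p q).Nonempty
  swap
  · rw [Set.not_nonempty_iff_eq_empty] at hS
    simp [hS]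
  obtain ⟨r0, hr0⟩ := hS
  rw [SimpleGraph.mem_commonNeighbors] at hr0
  obtain ⟨i0, j0, hij0, -, -, hpq0i, hpq0j, hagree0⟩ :=
    arrGraph_cn_aux hne hpq hr0.1 hr0.2
  set g1 : Fin k → Fin n := Function.update ⇑p i0 (q i0) with hg1
  set g2 : Fin k → Fin n := Function.update ⇑p j0 (q j0) with hg2
  have hsub : (fun r : Fin k ↪ Fin n => ⇑r) '' ((arrGraph n k).commonNeighbors p q)
      ⊆ {g1, g2} := by
    rintro _ ⟨r, hr, rfl⟩
    rw [SimpleGraph.mem_commonNeighbors] at hr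
    obtain ⟨i, j, hij, hriq, hrp, hpiq, hpjq, hagree⟩ :=
      arrGraph_cn_aux hne hpq hr.1 hr.2
    have hi_mem : i = i0 ∨ i = j0 := by
      by_contra h
      push_neg at h
      exact hpiq (hagree0 i h.1 h.2)
    rcases hi_mem with h | h
    · left
      subst h
      funext x
      by_cases hx : x = i
      · subst hx; simpa [hg1, Function.update_self] using hriq
      · simp [hg1, Function.update_of_ne hx, hrp x hx]
    · right
      subst h
      funext x
      by_cases hx : x = i
      · subst hx; simpa [hg2, Function.update_self] using hriq
      · simp [hg2, Function.update_of_ne hx, hrp x hx]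
  have hinj : Set.InjOn (fun r : Fin k ↪ Fin n => ⇑r)
      ((arrGraph n k).commonNeighbors p q) :=
    fun a _ b _ h => DFunLike.coe_injective h
  calc ((arrGraph n k).commonNeighbors p q).ncard
      = ((fun r : Fin k ↪ Fin n => ⇑r) ''
          ((arrGraph n k).commonNeighbors p q)).ncard :=
        (Set.ncard_image_of_injOn hinj).symm
    _ ≤ ({g1, g2} : Set (Fin k → Fin n)).ncard :=
        Set.ncard_le_ncard hsub (Set.toFinite _)
    _ ≤ 2 := (Set.ncard_insert_le _ _).trans (by simp)
end

section
/- In the (n,k)-arrangement graph A_{n,k} with n ≥ k + 2 and k ≥ 2, every edge is contained in exactly n − k − 1 triangles. -/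
/-- In `A_{n,k}` with `n ≥ k + 2` and `k ≥ 2`, every edge `pq` is contained in
exactly `n - k - 1` triangles, i.e. there are exactly `n - k - 1` vertices adjacent
to both endpoints. -/
theorem arrGraph_edge_triangles (n k : ℕ) (hn : k + 2 ≤ n) (hk : 2 ≤ k)
    (p q : Fin k ↪ Fin n) (hpq : (arrGraph n k).Adj p q) :
    {r : Fin k ↪ Fin n | (arrGraph n k).Adj p r ∧ (arrGraph n k).Adj q r}.ncard
      = n - k - 1 := by
  obtain ⟨i, hi, hag⟩ := hpq
  set S := {r : Fin k ↪ Fin n | (arrGraph n k).Adj p r ∧ (arrGraph n k).Adj q r} with hS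
  set F : Finset (Fin n) := insert (q i) (Finset.univ.image ⇑p) with hF
  have hqi : ∀ j, q i ≠ p j := by
    intro j
    rcases eq_or_ne j i with rfl | hj
    · exact fun h => hi h.symm
    · rw [hag j hj]
      exact fun h => hj (q.injective h.symm)
  have hFcard : F.card = k + 1 := by
    rw [hF, Finset.card_insert_of_notMem, Finset.card_image_of_injective _ p.injective,
      Finset.card_univ, Fintype.card_fin]
    simp only [Finset.mem_image, Finset.mem_univ, true_and, not_exists]
    exact fun j h => hqi j h.symm
  -- key structural lemma about common neighbors
  have key : ∀ r ∈ S, (∀ j, j ≠ i → p j = r j) ∧ p i ≠ r i ∧ q i ≠ r i := by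
    rintro r ⟨⟨a, ha, ha'⟩, ⟨b, hb, hb'⟩⟩
    have hai : a = i := by
      by_contra hne
      have h2 : p i = r i := ha' i (fun h => hne h.symm)
      have hbi : b = i := by
        by_contra hbne
        have : q i = r i := hb' i (fun h => hbne h.symm)
        exact hi (h2.trans this.symm)
      have hqa : q a = r a := hb' a (by rw [hbi]; exact hne)
      rw [← hag a hne] at hqa
      exact ha hqa
    have hbi : b = i := by
      by_contra hbne
      have h3 : p b = r b := ha' b (by rw [hai]; exact hbne)
      rw [hag b hbne] at h3
      exact hb h3
    subst hai; subst hbi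
    exact ⟨fun j hj => ha' j hj, ha, hb⟩
  have hbij : Set.BijOn (fun r : Fin k ↪ Fin n => r i) S (↑Fᶜ : Set (Fin n)) := by
    refine ⟨?_, ?_, ?_⟩
    · intro r hr
      obtain ⟨hoff, hpi, hqir⟩ := key r hr
      simp only [hF, Finset.coe_compl, Set.mem_compl_iff, Finset.mem_coe,
        Finset.mem_insert, Finset.mem_image, Finset.mem_univ, true_and, not_or, not_exists]
      refine ⟨fun h => hqir h.symm, fun j h => ?_⟩
      rcases eq_or_ne j i with rfl | hj
      · exact hpi h
      · rw [hoff j hj] at h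
        exact hj (r.injective h)
    · intro r hr r' hr' h
      obtain ⟨hoff, _, _⟩ := key r hr
      obtain ⟨hoff', _, _⟩ := key r' hr'
      apply DFunLike.ext
      intro j
      rcases eq_or_ne j i with rfl | hj
      · exact h
      · rw [← hoff j hj, ← hoff' j hj]
    · intro v hv
      simp only [hF, Finset.coe_compl, Set.mem_compl_iff, Finset.mem_coe,
        Finset.mem_insert, Finset.mem_image, Finset.mem_univ, true_and, not_or,
        not_exists] at hv
      obtain ⟨hv1, hv2⟩ := hv
      have hinj : Function.Injective (Function.update ⇑p i v) := by
        intro x y hxy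
        by_cases hx : x = i <;> by_cases hy : y = i
        · rw [hx, hy]
        · rw [hx, Function.update_self, Function.update_of_ne hy] at hxy
          exact absurd hxy.symm (hv2 y)
        · rw [hy, Function.update_self, Function.update_of_ne hx] at hxy
          exact absurd hxy (hv2 x)
        · rw [Function.update_of_ne hx, Function.update_of_ne hy] at hxy
          exact p.injective hxy
      refine ⟨⟨Function.update ⇑p i v, hinj⟩, ⟨⟨i, ?_, ?_⟩, ⟨i, ?_, ?_⟩⟩, ?_⟩
      · simp only [Function.Embedding.coeFn_mk, Function.update_self]
        exact hv2 i
      · intro j hj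
        simp [Function.Embedding.coeFn_mk, Function.update_of_ne hj]
      · simp only [Function.Embedding.coeFn_mk, Function.update_self]
        exact fun h => hv1 h.symm
      · intro j hj
        simp only [Function.Embedding.coeFn_mk, Function.update_of_ne hj]
        exact (hag j hj).symm
      · simp
  have h1 : S.ncard = (↑Fᶜ : Set (Fin n)).ncard := by
    rw [← hbij.image_eq, Set.ncard_image_of_injOn hbij.injOn]
  rw [h1, Set.ncard_coe_finset, Finset.card_compl, Fintype.card_fin, hFcard]
  omega
end

section
/- In the (n,k)-arrangement graph A_{n,k} with n ≥ k + 2 and k ≥ 2, every edge is contained in a chordless 4-cycle; in fact for every edge pq differing in position i, and every position j ≠ i, there is a chordless 4-cycle (p, q, x_j, y_j) where x_j and y_j are obtained from q and p respectively by changing position j to a common new symbol. -/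
lemma update_inj {k n : ℕ} (f : Fin k ↪ Fin n) (j : Fin k) (a : Fin n)
    (ha : a ∉ Set.range f) : Function.Injective (Function.update f j a) := by
  intro u v huv
  by_cases hu : u = j <;> by_cases hv : v = j
  · exact hu.trans hv.symm
  · rw [hu, Function.update_self, Function.update_of_ne hv] at huv
    exact absurd ⟨v, huv.symm⟩ ha
  · rw [hv, Function.update_self, Function.update_of_ne hu] at huv
    exact absurd ⟨u, huv⟩ ha
  · rw [Function.update_of_ne hu, Function.update_of_ne hv] at huv
    exact f.injective huv

/-- In `A_{n,k}` with `n ≥ k + 2` and `k ≥ 2`, every edge `pq` (differing in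
position `i`) lies, for each position `j ≠ i`, on a chordless 4-cycle
`(p, q, x_j, y_j)`, where `x_j` and `y_j` are obtained from `q` and `p`
respectively by changing position `j` to a common new symbol. -/
theorem arrGraph_edge_in_chordless_C4 (n k : ℕ) (hn : k + 2 ≤ n) (hk : 2 ≤ k)
    (p q : Fin k ↪ Fin n) (hpq : (arrGraph n k).Adj p q)
    (i : Fin k) (hi : p i ≠ q i) (j : Fin k) (hj : j ≠ i) :
    ∃ x y : Fin k ↪ Fin n,
      (arrGraph n k).Adj q x ∧ (arrGraph n k).Adj x y ∧ (arrGraph n k).Adj y p ∧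
      ¬ (arrGraph n k).Adj p x ∧ ¬ (arrGraph n k).Adj q y ∧
      (∀ l : Fin k, l ≠ j → x l = q l) ∧ (∀ l : Fin k, l ≠ j → y l = p l) ∧
      x j = y j ∧ x j ∉ Set.range p ∧ x j ≠ q i := by
  -- from the adjacency, p and q agree off i
  obtain ⟨i', hi', heq'⟩ := hpq
  have heq : ∀ l : Fin k, l ≠ i → p l = q l := by
    intro l hl
    by_cases hii : i' = i
    · exact heq' l (hii ▸ hl)
    · exact absurd (heq' i (Ne.symm hii)) hi
  -- find a fresh symbol a
  obtain ⟨a, ha⟩ : ∃ a : Fin n, a ∉ insert (q i) (Finset.univ.image p) := by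
    by_contra h
    push_neg at h
    have : (insert (q i) (Finset.univ.image p) : Finset (Fin n)) = Finset.univ :=
      Finset.eq_univ_iff_forall.2 h
    have hcard := congrArg Finset.card this
    have h1 : (insert (q i) (Finset.univ.image p)).card ≤ k + 1 := by
      calc (insert (q i) (Finset.univ.image p)).card
          ≤ (Finset.univ.image p).card + 1 := Finset.card_insert_le _ _
        _ ≤ k + 1 := by
            have := Finset.card_image_le (s := (Finset.univ : Finset (Fin k))) (f := p)
            simpa using Nat.add_le_add_right this 1
    rw [Finset.card_univ, Fintype.card_fin] at hcard
    omega
  simp only [Finset.mem_insert, Finset.mem_image, Finset.mem_univ, true_and, not_or,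
    not_exists] at ha
  obtain ⟨haq, hap⟩ := ha
  have hapr : a ∉ Set.range p := by rintro ⟨l, rfl⟩; exact hap l rfl
  have haqr : a ∉ Set.range q := by
    rintro ⟨l, rfl⟩
    by_cases hl : l = i
    · exact haq (by rw [hl])
    · exact hap l (heq l hl)
  refine ⟨⟨Function.update q j a, update_inj q j a haqr⟩,
          ⟨Function.update p j a, update_inj p j a hapr⟩, ?_, ?_, ?_, ?_, ?_, ?_, ?_, ?_, ?_, ?_⟩
  · -- Adj q x
    refine ⟨j, ?_, fun l hl => ?_⟩
    · simp only [Function.Embedding.coeFn_mk, Function.update_self]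
      exact fun h => haqr ⟨j, h⟩
    · simp [Function.update_of_ne hl]
  · -- Adj x y
    refine ⟨i, ?_, fun l hl => ?_⟩
    · simp only [Function.Embedding.coeFn_mk,
        Function.update_of_ne (Ne.symm hj)]
      exact fun h => hi h.symm
    · by_cases hlj : l = j
      · subst hlj; simp
      · simp only [Function.Embedding.coeFn_mk, Function.update_of_ne hlj]
        exact (heq l hl).symm
  · -- Adj y p
    refine ⟨j, ?_, fun l hl => ?_⟩
    · simp only [Function.Embedding.coeFn_mk, Function.update_self]
      exact fun h => hapr ⟨j, h.symm⟩
    · simp [Function.update_of_ne hl]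
  · -- ¬ Adj p x
    rintro ⟨m, -, hall⟩
    by_cases hmj : m = j
    · have := hall i (hmj ▸ (Ne.symm hj))
      simp only [Function.Embedding.coeFn_mk, Function.update_of_ne (Ne.symm hj)] at this
      exact hi this
    · have := hall j (Ne.symm hmj)
      simp only [Function.Embedding.coeFn_mk, Function.update_self] at this
      exact hapr ⟨j, this⟩
  · -- ¬ Adj q y
    rintro ⟨m, -, hall⟩
    by_cases hmj : m = j
    · have := hall i (hmj ▸ (Ne.symm hj))
      simp only [Function.Embedding.coeFn_mk, Function.update_of_ne (Ne.symm hj)] at this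
      exact hi this.symm
    · have := hall j (Ne.symm hmj)
      simp only [Function.Embedding.coeFn_mk, Function.update_self] at this
      exact haqr ⟨j, this⟩
  · intro l hl; simp [Function.update_of_ne hl]
  · intro l hl; simp [Function.update_of_ne hl]
  · simp
  · simpa using hapr
  · simpa using haq
end

section
/- In the (n,k)-star graph S_{n,k} with 2 ≤ k ≤ n − 2, two vertices joined by an unswap-edge have exactly n − k − 1 common neighbors, and two non-adjacent vertices with at least one common neighbor have exactly one common neighbor. -/
def nkStar (n k : ℕ) [NeZero k] : SimpleGraph (Fin k ↪ Fin n) where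
  Adj p q :=
    (∃ i : Fin k, i ≠ 0 ∧ q 0 = p i ∧ q i = p 0 ∧
        ∀ j : Fin k, j ≠ 0 → j ≠ i → q j = p j) ∨
    (q 0 ≠ p 0 ∧ ∀ j : Fin k, j ≠ 0 → q j = p j)
  symm := by
    constructor
    rintro p q (⟨i, hi, h1, h2, h3⟩ | ⟨h1, h2⟩)
    · exact Or.inl ⟨i, hi, h2.symm, h1.symm, fun j hj0 hji => (h3 j hj0 hji).symm⟩
    · exact Or.inr ⟨h1.symm, fun j hj => (h2 j hj).symm⟩
  loopless := by
    constructor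
    rintro p (⟨i, hi, h1, -, -⟩ | ⟨h1, -⟩)
    · exact hi (p.injective h1.symm)
    · exact h1 rfl

variable {n k : ℕ} [NeZero k]

lemma nkStar_adj {p q : Fin k ↪ Fin n} :
    (nkStar n k).Adj p q ↔
      ((∃ i : Fin k, i ≠ 0 ∧ q 0 = p i ∧ q i = p 0 ∧
        ∀ j : Fin k, j ≠ 0 → j ≠ i → q j = p j) ∨
      (q 0 ≠ p 0 ∧ ∀ j : Fin k, j ≠ 0 → q j = p j)) := Iff.rfl

lemma nkStar_classify {p q r : Fin k ↪ Fin n}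
    (hne : p ≠ q) (hadj : ¬ (nkStar n k).Adj p q)
    (hp : (nkStar n k).Adj p r) (hq : (nkStar n k).Adj q r) :
    (∃ i : Fin k, i ≠ 0 ∧ q i = p 0 ∧ q 0 ∉ Set.range p ∧
        r 0 = p i ∧ ∀ m, m ≠ 0 → r m = q m) ∨
    (∃ j : Fin k, j ≠ 0 ∧ p j = q 0 ∧ p 0 ∉ Set.range q ∧
        r 0 = q j ∧ ∀ m, m ≠ 0 → r m = p m) ∨
    (∃ i : Fin k, i ≠ 0 ∧ q i = p 0 ∧ q 0 ∈ Set.range p ∧ p 0 ∈ Set.range q ∧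
        r 0 = p i ∧ r i = p 0 ∧ ∀ m, m ≠ 0 → m ≠ i → r m = p m) := by
  rw [nkStar_adj] at hp hq
  rcases hp with ⟨i, hi0, hri0, hrii, hrim⟩ | ⟨hr0p, hrmp⟩ <;>
    rcases hq with ⟨j, hj0, hrj0, hrjj, hrjm⟩ | ⟨hr0q, hrmq⟩
  · -- swap_p i, swap_q j
    by_cases hij : i = j
    · subst hij
      exfalso
      apply hne
      apply Function.Embedding.ext
      intro m
      rcases eq_or_ne m 0 with rfl | hm0
      · exact (hrii.symm.trans hrjj)
      · rcases eq_or_ne m i with rfl | hmi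
        · exact (hri0.symm.trans hrj0)
        · exact ((hrim m hm0 hmi).symm.trans (hrjm m hm0 hmi))
    · -- i ≠ j
      have hqi : q i = p 0 := by
        rw [← hrjm i hi0 (fun h => hij h), hrii]
      have hpj : p j = q 0 := by
        rw [← hrim j hj0 (fun h => hij h.symm), hrjj]
      refine Or.inr (Or.inr ⟨i, hi0, hqi, ⟨j, hpj⟩, ⟨i, hqi⟩, hri0, hrii, hrim⟩)
  · -- swap_p i, unswap_q
    have hqi : q i = p 0 := (hrmq i hi0).symm.trans hrii
    have hq0 : q 0 ∉ Set.range p := by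
      rintro ⟨m, hm⟩
      rcases eq_or_ne m 0 with rfl | hm0
      · exact hi0 (q.injective (hqi.trans hm))
      · rcases eq_or_ne m i with rfl | hmi
        · exact hr0q (hri0.trans hm)
        · have : q m = q 0 := (hrmq m hm0).symm.trans ((hrim m hm0 hmi).trans hm)
          exact hm0 (q.injective this)
    exact Or.inl ⟨i, hi0, hqi, hq0, hri0, hrmq⟩
  · -- unswap_p, swap_q j
    have hpj : p j = q 0 := (hrmp j hj0).symm.trans hrjj
    have hp0 : p 0 ∉ Set.range q := by
      rintro ⟨m, hm⟩
      rcases eq_or_ne m 0 with rfl | hm0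
      · exact hj0 (p.injective (hpj.trans hm))
      · rcases eq_or_ne m j with rfl | hmj
        · exact hr0p (hrj0.trans hm)
        · have : p m = p 0 := (hrmp m hm0).symm.trans ((hrjm m hm0 hmj).trans hm)
          exact hm0 (p.injective this)
    exact Or.inr (Or.inl ⟨j, hj0, hpj, hp0, hrj0, hrmp⟩)
  · -- unswap both: p and q adjacent or equal, contradiction
    exfalso
    have hpq : ∀ m : Fin k, m ≠ 0 → q m = p m := fun m hm =>
      (hrmq m hm).symm.trans (hrmp m hm)
    rcases eq_or_ne (q 0) (p 0) with h0 | h0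
    · exact hne (Function.Embedding.ext fun m => by
        rcases eq_or_ne m 0 with rfl | hm0
        · exact h0.symm
        · exact (hpq m hm0).symm)
    · exact hadj (Or.inr ⟨h0, hpq⟩)

lemma nkStar_uniq {p q : Fin k ↪ Fin n}
    (hne : p ≠ q) (hadj : ¬ (nkStar n k).Adj p q)
    {r r' : Fin k ↪ Fin n}
    (hr : r ∈ (nkStar n k).commonNeighbors p q)
    (hr' : r' ∈ (nkStar n k).commonNeighbors p q) : r = r' := by
  rw [SimpleGraph.mem_commonNeighbors] at hr hr'
  rcases nkStar_classify hne hadj hr.1 hr.2 with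
      ⟨i, hi0, hqi, hq0, hr0, hrm⟩ | ⟨j, hj0, hpj, hp0, hr0, hrm⟩ |
      ⟨i, hi0, hqi, hq0, hp0, hr0, hri, hrm⟩ <;>
    rcases nkStar_classify hne hadj hr'.1 hr'.2 with
      ⟨i', hi0', hqi', hq0', hr0', hrm'⟩ | ⟨j', hj0', hpj', hp0', hr0', hrm'⟩ |
      ⟨i', hi0', hqi', hq0', hp0', hr0', hri', hrm'⟩
  · have hii : i = i' := q.injective (hqi.trans hqi'.symm)
    subst hii
    exact Function.Embedding.ext fun m => by
      rcases eq_or_ne m 0 with rfl | hm0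
      · exact hr0.trans hr0'.symm
      · exact (hrm m hm0).trans (hrm' m hm0).symm
  · exact absurd ⟨j', hpj'⟩ hq0
  · exact absurd hq0' hq0
  · exact absurd ⟨j, hpj⟩ hq0'
  · have hjj : j = j' := p.injective (hpj.trans hpj'.symm)
    subst hjj
    exact Function.Embedding.ext fun m => by
      rcases eq_or_ne m 0 with rfl | hm0
      · exact hr0.trans hr0'.symm
      · exact (hrm m hm0).trans (hrm' m hm0).symm
  · exact absurd hp0' hp0
  · exact absurd hq0 hq0'
  · exact absurd hp0 hp0'
  · have hii : i = i' := q.injective (hqi.trans hqi'.symm)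
    subst hii
    exact Function.Embedding.ext fun m => by
      rcases eq_or_ne m 0 with rfl | hm0
      · exact hr0.trans hr0'.symm
      · rcases eq_or_ne m i with rfl | hmi
        · exact hri.trans hri'.symm
        · exact (hrm m hm0 hmi).trans (hrm' m hm0 hmi).symm

/-- In `S_{n,k}` with `2 ≤ k ≤ n - 2`: two vertices joined by an unswap-edge have
exactly `n - k - 1` common neighbors, and two distinct non-adjacent vertices with
at least one common neighbor have exactly one common neighbor. -/
theorem nkStar_common_neighbors (n k : ℕ) [NeZero k] (hk : 2 ≤ k)
    (hn : k + 2 ≤ n) :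
    (∀ p q : Fin k ↪ Fin n, q 0 ≠ p 0 → (∀ j : Fin k, j ≠ 0 → q j = p j) →
      ((nkStar n k).commonNeighbors p q).ncard = n - k - 1) ∧
    (∀ p q : Fin k ↪ Fin n, p ≠ q → ¬ (nkStar n k).Adj p q →
      ((nkStar n k).commonNeighbors p q).Nonempty →
      ((nkStar n k).commonNeighbors p q).ncard = 1) := by
  constructor
  · intro p q hq0 hqj
    -- Step 1: every common neighbor is an unswap of both.
    have hstep : ∀ r : Fin k ↪ Fin n, r ∈ (nkStar n k).commonNeighbors p q →
        (∀ m : Fin k, m ≠ 0 → r m = p m) ∧ r 0 ≠ p 0 ∧ r 0 ≠ q 0 := by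
      intro r hr
      rw [SimpleGraph.mem_commonNeighbors] at hr
      obtain ⟨hp, hq⟩ := hr
      rw [nkStar_adj] at hp hq
      have hq0r : q 0 ∉ Set.range p := by
        rintro ⟨m, hm⟩
        rcases eq_or_ne m 0 with rfl | hm0
        · exact hq0 hm.symm
        · exact hm0 (q.injective ((hqj m hm0).trans hm))
      -- r must be unswap of p
      have hup : (∀ m : Fin k, m ≠ 0 → r m = p m) ∧ r 0 ≠ p 0 := by
        rcases hp with ⟨i, hi0, hri0, hrii, hrim⟩ | ⟨h1, h2⟩
        · exfalso
          rcases hq with ⟨j, hj0, hrj0, hrjj, hrjm⟩ | ⟨h1, h2⟩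
          · -- r j = q 0 ∈ range p, contradiction
            apply hq0r
            rcases eq_or_ne j i with rfl | hji
            · exact ⟨0, hrii.symm ▸ hrjj.symm ▸ rfl⟩
            · exact ⟨j, (hrim j hj0 hji).symm.trans hrjj⟩
          · -- unswap_q : r i = q i = p i but r i = p 0
            have : p 0 = p i := hrii.symm.trans ((h2 i hi0).trans (hqj i hi0))
            exact hi0 (p.injective this).symm
        · exact ⟨h2, h1⟩
      have hq0' : r 0 ≠ q 0 := by
        rcases hq with ⟨j, hj0, hrj0, hrjj, hrjm⟩ | ⟨h1, h2⟩
        · exfalso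
          have : q j = q 0 := ((hqj j hj0).trans (hup.1 j hj0).symm).trans hrjj
          exact hj0 (q.injective this)
        · exact h1
      exact ⟨hup.1, hup.2, hq0'⟩
    -- Step 2: injective on value at 0, image is complement of insert q0 (range p)
    have hinj : Set.InjOn (fun r : Fin k ↪ Fin n => r 0)
        ((nkStar n k).commonNeighbors p q) := by
      intro r hr r' hr' h
      apply Function.Embedding.ext
      intro m
      rcases eq_or_ne m 0 with rfl | hm0
      · exact h
      · exact ((hstep r hr).1 m hm0).trans ((hstep r' hr').1 m hm0).symm
    have himg : (fun r : Fin k ↪ Fin n => r 0) '' ((nkStar n k).commonNeighbors p q)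
        = (insert (q 0) (Set.range p))ᶜ := by
      ext a
      constructor
      · rintro ⟨r, hr, rfl⟩
        obtain ⟨h1, h2, h3⟩ := hstep r hr
        simp only [Set.mem_compl_iff, Set.mem_insert_iff, Set.mem_range, not_or, not_exists]
        refine ⟨h3, fun m hm => ?_⟩
        rcases eq_or_ne m 0 with rfl | hm0
        · exact h2 hm.symm
        · have : r 0 = r m := hm.symm ▸ (h1 m hm0).symm
          exact hm0 ((r.injective this).symm)
      · intro ha
        simp only [Set.mem_compl_iff, Set.mem_insert_iff, Set.mem_range, not_or,
          not_exists] at ha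
        obtain ⟨haq, hap⟩ := ha
        have hinjr : Function.Injective (fun m : Fin k => if m = 0 then a else p m) := by
          intro x y h
          simp only at h
          rcases eq_or_ne x 0 with rfl | hx0 <;> rcases eq_or_ne y 0 with rfl | hy0
          · rfl
          · rw [if_pos rfl, if_neg hy0] at h; exact absurd h.symm (hap y)
          · rw [if_neg hx0, if_pos rfl] at h; exact absurd h (hap x)
          · rw [if_neg hx0, if_neg hy0] at h; exact p.injective h
        refine ⟨⟨fun m => if m = 0 then a else p m, hinjr⟩, ?_, by simp⟩
        rw [SimpleGraph.mem_commonNeighbors, nkStar_adj, nkStar_adj]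
        constructor
        · refine Or.inr ⟨by simp only [Function.Embedding.coeFn_mk, if_pos rfl]; exact fun h => hap 0 h.symm, fun m hm => by simp [hm]⟩
        · refine Or.inr ⟨by simpa using haq, fun m hm => by
            simp only [Function.Embedding.coeFn_mk, if_neg hm]
            exact (hqj m hm).symm⟩
    -- Step 3: count
    have hq0r : q 0 ∉ Set.range p := by
      rintro ⟨m, hm⟩
      rcases eq_or_ne m 0 with rfl | hm0
      · exact hq0 hm.symm
      · exact hm0 (q.injective ((hqj m hm0).trans hm))
    have hcard : (insert (q 0) (Set.range p)).ncard = k + 1 := by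
      rw [Set.ncard_insert_of_notMem hq0r]
      have : (Set.range p).ncard = k := by
        rw [← Nat.card_coe_set_eq, Nat.card_range_of_injective p.injective]
        simp
      omega
    have hcompl : (insert (q 0) (Set.range p))ᶜ.ncard = n - (k + 1) := by
      have h1 := Set.ncard_add_ncard_compl (insert (q 0) (Set.range p))
      have h2 : Nat.card (Fin n) = n := by simp
      omega
    calc ((nkStar n k).commonNeighbors p q).ncard
        = ((fun r : Fin k ↪ Fin n => r 0) '' ((nkStar n k).commonNeighbors p q)).ncard :=
          (Set.ncard_image_of_injOn hinj).symm
      _ = n - (k + 1) := by rw [himg, hcompl]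
      _ = n - k - 1 := by omega
  · intro p q hne hadj ⟨r, hr⟩
    have : (nkStar n k).commonNeighbors p q = {r} := by
      ext r'
      simp only [Set.mem_singleton_iff]
      exact ⟨fun hr' => (nkStar_uniq hne hadj hr hr').symm, fun h => h ▸ hr⟩
    rw [this, Set.ncard_singleton]
end

section
/- In the dual-cube DC_n, any two non-adjacent vertices have at most 2 common neighbors. -/
/-- The dual-cube `DC_n`: vertices are binary strings `u = u_{2n} … u_0` of length
`2n+1`; `u ~ v` iff they differ in exactly one bit position `i`, where either
`0 ≤ i ≤ n-1` and `u_{2n} = v_{2n} = 0`, or `n ≤ i ≤ 2n-1` and `u_{2n} = v_{2n} = 1`,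
or `i = 2n`. -/
def dualCube (n : ℕ) : SimpleGraph (Fin (2 * n + 1) → ZMod 2) where
  Adj u v := ∃ i : Fin (2 * n + 1), u i ≠ v i ∧ (∀ j : Fin (2 * n + 1), j ≠ i → u j = v j) ∧
    ((i : ℕ) < n → u ⟨2 * n, by omega⟩ = 0) ∧
    (n ≤ (i : ℕ) ∧ (i : ℕ) < 2 * n → u ⟨2 * n, by omega⟩ = 1)
  symm := by
    constructor
    rintro u v ⟨i, hne, hag, h0, h1⟩
    have htop : (i : ℕ) < 2 * n → v ⟨2 * n, by omega⟩ = u ⟨2 * n, by omega⟩ := by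
      intro hi
      exact (hag ⟨2 * n, by omega⟩ (by simp [Fin.ext_iff]; omega)).symm
    refine ⟨i, hne.symm, fun j hj => (hag j hj).symm, ?_, ?_⟩
    · intro hi
      rw [htop (by omega)]
      exact h0 hi
    · rintro ⟨hi1, hi2⟩
      rw [htop (by omega)]
      exact h1 ⟨hi1, hi2⟩
  loopless := by
    constructor
    rintro u ⟨i, hne, -, -⟩
    exact hne rfl

/-- In the dual-cube `DC_n`, any two distinct non-adjacent vertices have at most
two common neighbors. -/
theorem dualCube_common_neighbors (n : ℕ) (u v : Fin (2 * n + 1) → ZMod 2)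
    (hne : u ≠ v) (hadj : ¬ (dualCube n).Adj u v) :
    ((dualCube n).commonNeighbors u v).ncard ≤ 2 := by
  have zmod2 : ∀ a b c : ZMod 2, a ≠ c → b ≠ c → a = b := by decide
  -- every common neighbor is `update u i (v i)` for some `i` with `u i ≠ v i`
  have key : ∀ w ∈ (dualCube n).commonNeighbors u v,
      ∃ i, u i ≠ v i ∧ w = Function.update u i (v i) := by
    rintro w ⟨⟨i, hui, hagi, -, -⟩, ⟨j, hvj, hagj, -, -⟩⟩
    by_cases hij : i = j
    · subst hij
      exact absurd (funext fun k => by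
        by_cases hk : k = i
        · subst hk; exact zmod2 _ _ _ hui hvj
        · rw [hagi k hk, hagj k hk]) hne
    · have hvi : v i = w i := hagj i hij
      refine ⟨i, fun h => hui (h.trans hvi), funext fun k => ?_⟩
      by_cases hk : k = i
      · subst hk
        simp [Function.update_self, hvi]
      · rw [Function.update_of_ne hk, ← hagi k hk]
  rcases Set.eq_empty_or_nonempty ((dualCube n).commonNeighbors u v) with h | ⟨w0, hw0⟩
  · simp [h]
  · obtain ⟨⟨i0, hui0, hagi0, -, -⟩, ⟨j0, hvj0, hagj0, -, -⟩⟩ := hw0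
    have hD : ∀ k, u k ≠ v k → k = i0 ∨ k = j0 := by
      intro k hk
      by_contra hcon
      push_neg at hcon
      exact hk ((hagi0 k hcon.1).trans (hagj0 k hcon.2).symm)
    have hsub : (dualCube n).commonNeighbors u v ⊆
        {Function.update u i0 (v i0), Function.update u j0 (v j0)} := by
      intro w hw
      obtain ⟨i, hi, rfl⟩ := key w hw
      rcases hD i hi with rfl | rfl
      · exact Or.inl rfl
      · exact Or.inr rfl
    calc ((dualCube n).commonNeighbors u v).ncard
        ≤ ({Function.update u i0 (v i0), Function.update u j0 (v j0)} :
            Set (Fin (2 * n + 1) → ZMod 2)).ncard :=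
          Set.ncard_le_ncard hsub (Set.toFinite _)
      _ ≤ 2 := (Set.ncard_insert_le _ _).trans (by simp)
end
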